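/- Let n ≥ 4 and m = n(n+1)/2. On ℝ^m with coordinates x_j (1 ≤ j ≤ n) and x_{kl} (1 ≤ k < l ≤ n), with the vector fields U_{kl} and X_j as in the homogeneous model, define X₁' = X₁ + x₁₂·U₃₄ + (1/2)x₂·U₂₁ and X₂' = X₂ − (1/2)x₁·U₁₂. Then the Lie brackets satisfy: [X₁', X₂'] = U₁₂; [U₁₂, X₁'] = U₃₄; [X₁', X_j] = U₁ⱼ and [X₂', X_j] = U₂ⱼ for 3 ≤ j ≤ n; [U_{kl}, X₁'] = 0 whenever {k,l} ≠ {1,2}; and [U_{kl}, X₂'] = 0 for all k < l. In particular, the frame {X₁', X₂', X₃, …, X_n, U_{kl}} has the same commutator relations as the flat model except for the single additional relation [U₁₂, X₁'] = U₃₄. -/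

import Mathlib

/-!
Statement 0: the commutator relations of the frame `U_{kl}`, `X_j` of the homogeneous
model of a free `n`-distribution on `ℝ^m`, `m = n(n+1)/2`.
-/

open scoped BigOperators

/-- The index set for the coordinates on `ℝ^m`, `m = n(n+1)/2`: the coordinates `x_j`
for `1 ≤ j ≤ n` and the coordinates `x_{kl}` for `1 ≤ k < l ≤ n`. -/
abbrev FreeDist.Idx (n : ℕ) := Fin n ⊕ {p : Fin n × Fin n // p.1 < p.2}

namespace FreeDist

/-- The constant vector `U_{kl} = ∂/∂x_{kl}` for `k < l`, extended to all indices by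
`U_{lk} = -U_{kl}` and `U_{kk} = 0`. -/
def uVec (n : ℕ) (k l : Fin n) : Idx n → ℝ :=
  Sum.elim (fun _ => 0) (fun p =>
    (if p.1.1 = k ∧ p.1.2 = l then (1 : ℝ) else 0) -
    (if p.1.1 = l ∧ p.1.2 = k then (1 : ℝ) else 0))

/-- The constant vector field `U_{kl}`. -/
def uField (n : ℕ) (k l : Fin n) : (Idx n → ℝ) → Idx n → ℝ := fun _ => uVec n k l

/-- The vector field `X_j = ∂/∂x_j + (1/2) ∑_{p=1}^n x_p U_{pj}`. -/
noncomputable def xField (n : ℕ) (j : Fin n) : (Idx n → ℝ) → Idx n → ℝ := fun q =>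
  (fun i => if i = Sum.inl j then (1 : ℝ) else 0) +
    (1 / 2 : ℝ) • ∑ p : Fin n, q (Sum.inl p) • uVec n p j

/-- The Lie bracket of vector fields on `ℝ^m`:
`[V,W](p) = DW_p(V(p)) − DV_p(W(p))`. -/
noncomputable def vbracket (n : ℕ) (V W : (Idx n → ℝ) → Idx n → ℝ) : (Idx n → ℝ) → Idx n → ℝ :=
  fun q => fderiv ℝ W q (V q) - fderiv ℝ V q (W q)

end FreeDist

open FreeDist

noncomputable section

namespace FreeDist

/-- The modified vector field `X₁' = X₁ + x₁₂·U₃₄ + (1/2)x₂·U₂₁` (with 1-based indices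
as in the paper; here indices are 0-based). -/
def x1' (n : ℕ) (hn : 4 ≤ n) : (Idx n → ℝ) → Idx n → ℝ := fun q =>
  xField n ⟨0, by omega⟩ q +
    q (Sum.inr ⟨(⟨0, by omega⟩, ⟨1, by omega⟩), by simp [Fin.mk_lt_mk]⟩) •
      uVec n ⟨2, by omega⟩ ⟨3, by omega⟩ +
    ((1 / 2 : ℝ) * q (Sum.inl ⟨1, by omega⟩)) • uVec n ⟨1, by omega⟩ ⟨0, by omega⟩

/-- The modified vector field `X₂' = X₂ − (1/2)x₁·U₁₂`. -/
def x2' (n : ℕ) (hn : 4 ≤ n) : (Idx n → ℝ) → Idx n → ℝ := fun q =>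
  xField n ⟨1, by omega⟩ q -
    ((1 / 2 : ℝ) * q (Sum.inl ⟨0, by omega⟩)) • uVec n ⟨0, by omega⟩ ⟨1, by omega⟩

end FreeDist

namespace FreeDist

variable {n : ℕ}

lemma uVec_inl (k l p : Fin n) : uVec n k l (Sum.inl p) = 0 := rfl

lemma uVec_inr (k l : Fin n) (p : {p : Fin n × Fin n // p.1 < p.2}) :
    uVec n k l (Sum.inr p) =
      (if p.1.1 = k ∧ p.1.2 = l then (1:ℝ) else 0) -
      (if p.1.1 = l ∧ p.1.2 = k then (1:ℝ) else 0) := rfl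

lemma uVec_swap (k l : Fin n) : uVec n l k = - uVec n k l := by
  funext i
  cases i with
  | inl p => simp [uVec]
  | inr p => simp only [uVec, Sum.elim_inr, Pi.neg_apply]; ring

def sumLin (n : ℕ) (v : Fin n → Idx n → ℝ) : (Idx n → ℝ) →L[ℝ] (Idx n → ℝ) :=
  ∑ p : Fin n, (ContinuousLinearMap.proj (Sum.inl p)).smulRight (v p)

lemma sumLin_apply (v : Fin n → Idx n → ℝ) (q : Idx n → ℝ) :
    sumLin n v q = ∑ p : Fin n, q (Sum.inl p) • v p := by
  simp [sumLin]

lemma fderiv_affine (c : Idx n → ℝ) (A : (Idx n → ℝ) →L[ℝ] (Idx n → ℝ)) (q : Idx n → ℝ) :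
    fderiv ℝ (fun x => c + A x) q = A := (A.hasFDerivAt.const_add c).fderiv

lemma sum_ite_one_smul (a : Fin n) (v : Fin n → Idx n → ℝ) :
    ∑ p : Fin n, (if p = a then (1:ℝ) else 0) • v p = v a := by
  simp [ite_smul]

/-- The linear part of `xField n j`. -/
def AX (n : ℕ) (j : Fin n) : (Idx n → ℝ) →L[ℝ] (Idx n → ℝ) :=
  (1/2 : ℝ) • sumLin n (fun p => uVec n p j)

lemma AX_apply (j : Fin n) (q : Idx n → ℝ) :
    AX n j q = (1/2:ℝ) • ∑ p : Fin n, q (Sum.inl p) • uVec n p j := by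
  simp [AX, sumLin_apply]

lemma AX_apply_inl (j a : Fin n) (w : Idx n → ℝ)
    (hw : ∀ p, w (Sum.inl p) = if p = a then 1 else 0) :
    AX n j w = (1/2:ℝ) • uVec n a j := by
  rw [AX_apply]
  simp only [hw]
  rw [sum_ite_one_smul]

lemma AX_apply_uVec (j k l : Fin n) : AX n j (uVec n k l) = 0 := by
  simp [AX_apply, uVec_inl]

def eVec (n : ℕ) (j : Fin n) : Idx n → ℝ := fun i => if i = Sum.inl j then (1:ℝ) else 0

lemma xField_eq (j : Fin n) : xField n j = fun q => eVec n j + AX n j q := by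
  funext q; rw [AX_apply]; rfl

lemma fderiv_xField (j : Fin n) (q : Idx n → ℝ) :
    fderiv ℝ (xField n j) q = AX n j := by
  rw [xField_eq]; exact fderiv_affine _ _ q

lemma fderiv_uField (k l : Fin n) (q : Idx n → ℝ) :
    fderiv ℝ (uField n k l) q = 0 :=
  fderiv_const_apply _

/-- The `x₁₂` coordinate index. -/
def e01 (n : ℕ) (hn : 4 ≤ n) : Idx n :=
  Sum.inr ⟨(⟨0, by omega⟩, ⟨1, by omega⟩), by simp [Fin.mk_lt_mk]⟩

/-- Linear part of `x1'`. -/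
def A1 (n : ℕ) (hn : 4 ≤ n) : (Idx n → ℝ) →L[ℝ] (Idx n → ℝ) :=
  AX n ⟨0, by omega⟩ +
    (ContinuousLinearMap.proj (e01 n hn)).smulRight (uVec n ⟨2, by omega⟩ ⟨3, by omega⟩) +
    (1/2 : ℝ) • (ContinuousLinearMap.proj (R := ℝ)
      (Sum.inl (⟨1, by omega⟩ : Fin n))).smulRight (uVec n ⟨1, by omega⟩ ⟨0, by omega⟩)

lemma A1_apply (hn : 4 ≤ n) (q : Idx n → ℝ) :
    A1 n hn q = AX n ⟨0, by omega⟩ q + q (e01 n hn) • uVec n ⟨2, by omega⟩ ⟨3, by omega⟩ +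
      ((1/2 : ℝ) * q (Sum.inl ⟨1, by omega⟩)) • uVec n ⟨1, by omega⟩ ⟨0, by omega⟩ := by
  simp [A1, smul_smul]

/-- Linear part of `x2'`. -/
def A2 (n : ℕ) (hn : 4 ≤ n) : (Idx n → ℝ) →L[ℝ] (Idx n → ℝ) :=
  AX n ⟨1, by omega⟩ -
    (1/2 : ℝ) • (ContinuousLinearMap.proj (R := ℝ)
      (Sum.inl (⟨0, by omega⟩ : Fin n))).smulRight (uVec n ⟨0, by omega⟩ ⟨1, by omega⟩)

lemma A2_apply (hn : 4 ≤ n) (q : Idx n → ℝ) :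
    A2 n hn q = AX n ⟨1, by omega⟩ q -
      ((1/2 : ℝ) * q (Sum.inl ⟨0, by omega⟩)) • uVec n ⟨0, by omega⟩ ⟨1, by omega⟩ := by
  simp [A2, smul_smul]

lemma x1'_eq (hn : 4 ≤ n) :
    x1' n hn = fun q => eVec n ⟨0, by omega⟩ + A1 n hn q := by
  funext q
  rw [x1', A1_apply, xField_eq, e01]
  abel_nf
  exact add_assoc _ _ _

lemma x2'_eq (hn : 4 ≤ n) :
    x2' n hn = fun q => eVec n ⟨1, by omega⟩ + A2 n hn q := by
  funext q
  rw [x2', A2_apply, xField_eq]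
  abel_nf
  exact add_assoc _ _ _

lemma fderiv_x1' (hn : 4 ≤ n) (q : Idx n → ℝ) :
    fderiv ℝ (x1' n hn) q = A1 n hn := by
  rw [x1'_eq]; exact fderiv_affine _ _ q

lemma fderiv_x2' (hn : 4 ≤ n) (q : Idx n → ℝ) :
    fderiv ℝ (x2' n hn) q = A2 n hn := by
  rw [x2'_eq]; exact fderiv_affine _ _ q

lemma xField_inl (j : Fin n) (q : Idx n → ℝ) (p : Fin n) :
    xField n j q (Sum.inl p) = if p = j then 1 else 0 := by
  simp [xField, Finset.sum_apply, uVec_inl, Sum.inl.injEq]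

lemma x1'_inl (hn : 4 ≤ n) (q : Idx n → ℝ) (p : Fin n) :
    x1' n hn q (Sum.inl p) = if p = (⟨0, by omega⟩ : Fin n) then 1 else 0 := by
  simp [x1', xField_inl, uVec_inl]

lemma x2'_inl (hn : 4 ≤ n) (q : Idx n → ℝ) (p : Fin n) :
    x2' n hn q (Sum.inl p) = if p = (⟨1, by omega⟩ : Fin n) then 1 else 0 := by
  simp [x2', xField_inl, uVec_inl]

lemma xField_e01 (hn : 4 ≤ n) (j : Fin n) (hj0 : j ≠ ⟨0, by omega⟩) (hj1 : j ≠ ⟨1, by omega⟩)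
    (q : Idx n → ℝ) : xField n j q (e01 n hn) = 0 := by
  simp [xField, Finset.sum_apply, e01, uVec_inr, hj0.symm, hj1.symm]

lemma x2'_e01 (hn : 4 ≤ n) (q : Idx n → ℝ) : x2' n hn q (e01 n hn) = 0 := by
  have h01 : ((⟨0, by omega⟩ : Fin n) = ⟨1, by omega⟩) = False := by
    simp [Fin.ext_iff]
  simp [x2', xField, Finset.sum_apply, e01, uVec_inr, h01, mul_ite,
    Finset.sum_ite_eq, Finset.sum_ite_eq']

end FreeDist

/-- For `n ≥ 4`, the frame `{X₁', X₂', X₃, …, X_n, U_{kl}}` satisfies the same commutator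
relations as the flat homogeneous model, except for the single additional relation
`[U₁₂, X₁'] = U₃₄`. -/
theorem statement19 (n : ℕ) (hn : 4 ≤ n) :
    vbracket n (x1' n hn) (x2' n hn) = uField n ⟨0, by omega⟩ ⟨1, by omega⟩ ∧
    vbracket n (uField n ⟨0, by omega⟩ ⟨1, by omega⟩) (x1' n hn) =
      uField n ⟨2, by omega⟩ ⟨3, by omega⟩ ∧
    (∀ j : Fin n, 2 ≤ (j : ℕ) →
      vbracket n (x1' n hn) (xField n j) = uField n ⟨0, by omega⟩ j ∧
      vbracket n (x2' n hn) (xField n j) = uField n ⟨1, by omega⟩ j) ∧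
    (∀ k l : Fin n, k < l → ¬(k = ⟨0, by omega⟩ ∧ l = ⟨1, by omega⟩) →
      vbracket n (uField n k l) (x1' n hn) = 0) ∧
    (∀ k l : Fin n, k < l → vbracket n (uField n k l) (x2' n hn) = 0) := by
  refine ⟨?_, ?_, ?_, ?_, ?_⟩
  · -- [X₁', X₂'] = U₁₂
    funext q
    simp only [vbracket, uField]
    rw [fderiv_x1' hn, fderiv_x2' hn, A1_apply, A2_apply,
      AX_apply_inl _ _ _ (x1'_inl hn q), AX_apply_inl _ _ _ (x2'_inl hn q),
      x1'_inl, x2'_inl, x2'_e01 hn q]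
    simp only [Fin.mk.injEq, if_true, reduceIte, mul_one, mul_zero, zero_smul, add_zero,
      zero_add, one_ne_zero, if_false]
    rw [uVec_swap ⟨0, by omega⟩ ⟨1, by omega⟩]
    module
  · -- [U₁₂, X₁'] = U₃₄
    funext q
    simp only [vbracket, uField]
    rw [fderiv_x1' hn, fderiv_uField, A1_apply, AX_apply_uVec]
    simp [e01, uVec_inr, uVec_inl, Fin.ext_iff]
  · -- [X₁', X_j] and [X₂', X_j] for j ≥ 2
    intro j hj
    have hj0 : j ≠ ⟨0, by omega⟩ := by
      simp only [ne_eq, Fin.ext_iff]; omega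
    have hj1 : j ≠ ⟨1, by omega⟩ := by
      simp only [ne_eq, Fin.ext_iff]; omega
    constructor
    · funext q
      simp only [vbracket, uField]
      rw [fderiv_x1' hn, fderiv_xField, A1_apply,
        AX_apply_inl _ _ _ (x1'_inl hn q), AX_apply_inl _ _ _ (xField_inl j q),
        xField_inl, xField_e01 hn j hj0 hj1]
      simp only [if_neg hj1.symm, mul_zero, zero_smul, add_zero]
      rw [uVec_swap ⟨0, by omega⟩ j]
      module
    · funext q
      simp only [vbracket, uField]
      rw [fderiv_x2' hn, fderiv_xField, A2_apply,
        AX_apply_inl _ _ _ (x2'_inl hn q), AX_apply_inl _ _ _ (xField_inl j q),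
        xField_inl]
      simp only [if_neg hj0.symm, mul_zero, zero_smul, sub_zero]
      rw [uVec_swap ⟨1, by omega⟩ j]
      module
  · -- [U_{kl}, X₁'] = 0 for {k,l} ≠ {1,2}
    intro k l hkl hne
    have h1 : ¬((⟨0, by omega⟩ : Fin n) = k ∧ (⟨1, by omega⟩ : Fin n) = l) :=
      fun h => hne ⟨h.1.symm, h.2.symm⟩
    have h2 : ¬((⟨0, by omega⟩ : Fin n) = l ∧ (⟨1, by omega⟩ : Fin n) = k) := by
      rintro ⟨h, h'⟩
      rw [← h, ← h'] at hkl
      simp [Fin.lt_def] at hkl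
    funext q
    simp only [vbracket, uField]
    rw [fderiv_x1' hn, fderiv_uField, A1_apply, AX_apply_uVec]
    simp [e01, uVec_inr, uVec_inl, h1, h2]
  · -- [U_{kl}, X₂'] = 0
    intro k l hkl
    funext q
    simp only [vbracket, uField]
    rw [fderiv_x2' hn, fderiv_uField, A2_apply, AX_apply_uVec]
    simp [uVec_inl]

end
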